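/- arXiv:2110.03652 — 3 statements merged into one kernel-verified Lean document; each statement's English description precedes it below -/
import Mathlib

section
/- For probability measures μ ≪ ν on a measurable space X, the squared Hellinger distance H²(μ,ν) := ∫ (√(dμ/dν) − 1)² dν satisfies: for every measurable f : X → ℝ with f(x) < 1 for all x and f, f/(1−f) integrable, H²(μ,ν) ≥ ∫ f dμ − ∫ f/(1−f) dν, with equality for f = 1 − (dμ/dν)^{−1/2} (assuming integrability). -/
open MeasureTheory

lemma hellinger_ptwise (s f : ℝ) (hs : 0 ≤ s) (hf : f < 1) :
    s ^ 2 * f - f / (1 - f) ≤ (s - 1) ^ 2 := by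
  have hg : 0 < 1 - f := by linarith
  rw [sub_le_iff_le_add, ← sub_le_iff_le_add', le_div_iff₀ hg]
  nlinarith [sq_nonneg ((1 - f) * s - 1)]

theorem hellinger_variational {X : Type*} [MeasurableSpace X]
    (μ ν : Measure X) [IsProbabilityMeasure μ] [IsProbabilityMeasure ν]
    (hac : μ ≪ ν) :
    (∀ f : X → ℝ, Measurable f → (∀ x, f x < 1) → Integrable f μ →
      Integrable (fun x => f x / (1 - f x)) ν →
      ∫ x, f x ∂μ - ∫ x, f x / (1 - f x) ∂ν ≤
        ∫ x, (Real.sqrt ((μ.rnDeriv ν x).toReal) - 1) ^ 2 ∂ν) ∧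
    ((∀ᵐ x ∂ν, 0 < μ.rnDeriv ν x) →
      Integrable (fun x => 1 - ((μ.rnDeriv ν x).toReal) ^ (-(1:ℝ)/2)) μ →
      Integrable (fun x => (1 - ((μ.rnDeriv ν x).toReal) ^ (-(1:ℝ)/2)) /
        (1 - (1 - ((μ.rnDeriv ν x).toReal) ^ (-(1:ℝ)/2)))) ν →
      (∫ x, (1 - ((μ.rnDeriv ν x).toReal) ^ (-(1:ℝ)/2)) ∂μ) -
        ∫ x, (1 - ((μ.rnDeriv ν x).toReal) ^ (-(1:ℝ)/2)) /
          (1 - (1 - ((μ.rnDeriv ν x).toReal) ^ (-(1:ℝ)/2))) ∂ν =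
        ∫ x, (Real.sqrt ((μ.rnDeriv ν x).toReal) - 1) ^ 2 ∂ν) := by
  have hrmeas : Measurable fun x => (μ.rnDeriv ν x).toReal :=
    (Measure.measurable_rnDeriv μ ν).ennreal_toReal
  have hrint : Integrable (fun x => (μ.rnDeriv ν x).toReal) ν :=
    Measure.integrable_toReal_rnDeriv
  have hrnn : ∀ x, 0 ≤ (μ.rnDeriv ν x).toReal := fun x => ENNReal.toReal_nonneg
  have hsqint : Integrable (fun x => (Real.sqrt ((μ.rnDeriv ν x).toReal) - 1) ^ 2) ν := by
    refine Integrable.mono' (hrint.add (integrable_const 1))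
      ((hrmeas.sqrt.sub measurable_const).pow_const 2).aestronglyMeasurable
      (Filter.Eventually.of_forall fun x => ?_)
    simp only [Pi.add_apply]
    rw [Real.norm_eq_abs, abs_of_nonneg (sq_nonneg _)]
    nlinarith [Real.sq_sqrt (hrnn x), Real.sqrt_nonneg ((μ.rnDeriv ν x).toReal)]
  constructor
  · intro f hfm hf1 hfμ hfν
    have hint1 : Integrable (fun x => (μ.rnDeriv ν x).toReal * f x) ν :=
      (integrable_rnDeriv_smul_iff hac).mpr hfμ
    have hμf : ∫ x, f x ∂μ = ∫ x, (μ.rnDeriv ν x).toReal * f x ∂ν := by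
      rw [← integral_rnDeriv_smul hac (f := f)]; rfl
    rw [hμf, ← integral_sub hint1 hfν]
    refine integral_mono (hint1.sub hfν) hsqint fun x => ?_
    have h := hellinger_ptwise (Real.sqrt ((μ.rnDeriv ν x).toReal)) (f x)
      (Real.sqrt_nonneg _) (hf1 x)
    rwa [Real.sq_sqrt (hrnn x)] at h
  · intro hpos hfμ hfν
    set f := fun x => 1 - ((μ.rnDeriv ν x).toReal) ^ (-(1:ℝ)/2) with hfdef
    have hint1 : Integrable (fun x => (μ.rnDeriv ν x).toReal * f x) ν :=
      (integrable_rnDeriv_smul_iff hac).mpr hfμ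
    have hμf : ∫ x, f x ∂μ = ∫ x, (μ.rnDeriv ν x).toReal * f x ∂ν := by
      rw [← integral_rnDeriv_smul hac (f := f)]; rfl
    rw [hμf, ← integral_sub hint1 hfν]
    refine integral_congr_ae ?_
    filter_upwards [hpos, Measure.rnDeriv_lt_top μ ν] with x hx hxt
    set r := (μ.rnDeriv ν x).toReal with hrdef
    have hr : 0 < r := ENNReal.toReal_pos hx.ne' hxt.ne
    have hs : 0 < Real.sqrt r := Real.sqrt_pos.mpr hr
    have hr2 : Real.sqrt r ^ 2 = r := Real.sq_sqrt hr.le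
    have h1 : r ^ (-(1:ℝ)/2) = (Real.sqrt r)⁻¹ := by
      rw [neg_div, Real.rpow_neg hr.le, Real.sqrt_eq_rpow]
    show r * f x - f x / (1 - f x) = (Real.sqrt r - 1) ^ 2
    have hfx : f x = 1 - (Real.sqrt r)⁻¹ := by rw [hfdef]; simp only [← hrdef, h1]
    rw [hfx]
    field_simp
    nlinarith [hr2, hs]
end

section
/- Let f : ℝᵈ → ℝ be an L¹ ∩ L² function whose Fourier transform F̂ satisfies the Plancherel relations for all partial derivatives up to order s = ⌊d/2⌋ + 2, with ‖D^α f‖_{L²} ≤ b for all multi-indices α with |α| ∈ {1, s}. Then the spectral norm S₁(f) := ∫_{ℝᵈ} ‖ω‖₁ |F̂(ω)| dω is finite and satisfies S₁(f) ≤ b·√d·κ_d, where κ_d² := (d + d^s) ∫_{ℝᵈ} (1 + ‖ω‖^{2(s−1)})^{−1} dω < ∞. -/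
open MeasureTheory
open scoped RealInnerProductSpace ENNReal

/-- The Fourier transform of an integrable complex-valued function on ℝᵈ,
under the convention `F̂(ω) = ∫ e^{-i ω·x} f(x) dx`. -/
noncomputable def fourierTr (d : ℕ) (f : EuclideanSpace ℝ (Fin d) → ℂ)
    (ω : EuclideanSpace ℝ (Fin d)) : ℂ :=
  ∫ x, Complex.exp (-Complex.I * (⟪ω, x⟫ : ℝ)) * f x

theorem spectral_norm_bound (d : ℕ) (b : ℝ) (hb : 0 ≤ b)
    (f : EuclideanSpace ℝ (Fin d) → ℂ)
    (hf1 : Integrable f) (hf2 : MemLp f 2 (volume : Measure (EuclideanSpace ℝ (Fin d))))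
    (F : EuclideanSpace ℝ (Fin d) → ℂ) (hF : F = fourierTr d f)
    (hPlancherel : ∀ α : Fin d → ℕ, ((∑ i, α i) = 1 ∨ (∑ i, α i) = d / 2 + 2) →
      ∫⁻ ω : EuclideanSpace ℝ (Fin d),
          ENNReal.ofReal ((∏ i, (ω i) ^ (2 * α i)) * ‖F ω‖ ^ 2) ≤
        ENNReal.ofReal (b ^ 2)) :
    Integrable (fun ω : EuclideanSpace ℝ (Fin d) => (∑ i, |ω i|) * ‖F ω‖) ∧
    Integrable (fun ω : EuclideanSpace ℝ (Fin d) =>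
      (1 + ‖ω‖ ^ (2 * (d / 2 + 1)))⁻¹) ∧
    ∫ ω : EuclideanSpace ℝ (Fin d), (∑ i, |ω i|) * ‖F ω‖ ≤
      b * Real.sqrt d * Real.sqrt (((d : ℝ) + (d : ℝ) ^ (d / 2 + 2)) *
        ∫ ω : EuclideanSpace ℝ (Fin d), (1 + ‖ω‖ ^ (2 * (d / 2 + 1)))⁻¹) := by
  classical
  set n : ℕ := d / 2 + 1 with hn
  -- continuity of the Fourier transform
  have hFc : Continuous F := by
    rw [hF]
    unfold fourierTr
    refine MeasureTheory.continuous_of_dominated (bound := fun x => ‖f x‖) ?_ ?_ hf1.norm ?_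
    · intro ω
      have h1 : Continuous fun x : EuclideanSpace ℝ (Fin d) => (⟪ω, x⟫ : ℝ) := continuous_const.inner continuous_id
      exact ((Complex.continuous_exp.comp
        (continuous_const.mul (Complex.continuous_ofReal.comp h1))).aestronglyMeasurable).mul
        hf1.1
    · intro ω
      filter_upwards with x
      rw [norm_mul]
      have : ‖Complex.exp (-Complex.I * ((⟪ω, x⟫ : ℝ) : ℂ))‖ = 1 := by
        rw [Complex.norm_exp]
        simp
      rw [this, one_mul]
    · filter_upwards with x
      have h1 : Continuous fun ω : EuclideanSpace ℝ (Fin d) => (⟪ω, x⟫ : ℝ) := continuous_id.inner continuous_const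
      exact (Complex.continuous_exp.comp
        (continuous_const.mul (Complex.continuous_ofReal.comp h1))).mul continuous_const
  have hcoord : ∀ i : Fin d, Continuous fun ω : EuclideanSpace ℝ (Fin d) => ω i := fun i =>
    (EuclideanSpace.proj (𝕜 := ℝ) i).continuous
  -- squared norm as sum of squares
  have hns : ∀ ω : EuclideanSpace ℝ (Fin d), ‖ω‖ ^ 2 = ∑ i, (ω i) ^ 2 := by
    intro ω
    rw [EuclideanSpace.norm_eq, Real.sq_sqrt (by positivity)]
    simp [Real.norm_eq_abs, sq_abs]
  -- ℓ¹–ℓ² comparison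
  have hsum_abs : ∀ ω : EuclideanSpace ℝ (Fin d), (∑ i, |ω i|) ≤ Real.sqrt d * ‖ω‖ := by
    intro ω
    have h1 : (∑ i, |ω i|) ^ 2 ≤ (d : ℝ) * ∑ i, (ω i) ^ 2 := by
      simpa [sq_abs, Finset.card_univ] using
        sq_sum_le_card_mul_sum_sq (s := (Finset.univ : Finset (Fin d)))
          (f := fun i => |ω i|)
    have h2 : (∑ i, |ω i|) = Real.sqrt ((∑ i, |ω i|) ^ 2) :=
      (Real.sqrt_sq (by positivity)).symm
    rw [h2]
    calc Real.sqrt ((∑ i, |ω i|) ^ 2) ≤ Real.sqrt ((d : ℝ) * ∑ i, (ω i) ^ 2) :=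
          Real.sqrt_le_sqrt h1
      _ = Real.sqrt d * Real.sqrt (∑ i, (ω i) ^ 2) := Real.sqrt_mul (by positivity) _
      _ = Real.sqrt d * ‖ω‖ := by rw [← hns, Real.sqrt_sq (norm_nonneg ω)]
  -- integrability of G
  have hGc : Continuous fun ω : EuclideanSpace ℝ (Fin d) => (1 + ‖ω‖ ^ (2 * n))⁻¹ := by
    refine Continuous.inv₀ (continuous_const.add (continuous_norm.pow (2 * n))) fun ω => by positivity
  have hGint : Integrable (fun ω : EuclideanSpace ℝ (Fin d) => (1 + ‖ω‖ ^ (2 * n))⁻¹) := by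
    have hd : (Module.finrank ℝ (EuclideanSpace ℝ (Fin d)) : ℝ) < ((2 * n : ℕ) : ℝ) := by
      have : Module.finrank ℝ (EuclideanSpace ℝ (Fin d)) = d := finrank_euclideanSpace_fin
      rw [this]
      exact_mod_cast (by omega : d < 2 * n)
    have key : ∀ t : ℝ, 0 ≤ t → (1 + t) ^ (2 * n) ≤ 2 ^ (2 * n) * (1 + t ^ (2 * n)) := by
      intro t ht
      have h1 : 1 + t ≤ 2 * max 1 t := by
        rcases le_total t 1 with h | h
        · have := le_max_left (1:ℝ) t; nlinarith [le_max_right (1:ℝ) t]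
        · nlinarith [le_max_right (1:ℝ) t, le_max_left (1:ℝ) t]
      calc (1 + t) ^ (2 * n) ≤ (2 * max 1 t) ^ (2 * n) :=
            pow_le_pow_left₀ (by positivity) h1 _
        _ = 2 ^ (2 * n) * (max 1 t) ^ (2 * n) := mul_pow _ _ _
        _ ≤ 2 ^ (2 * n) * (1 + t ^ (2 * n)) := by
            have : (max 1 t) ^ (2 * n) ≤ 1 + t ^ (2 * n) := by
              rcases le_total t 1 with h | h
              · rw [max_eq_left h, one_pow]; nlinarith [pow_nonneg ht (2 * n)]
              · rw [max_eq_right h]; nlinarith [pow_nonneg ht (2 * n)]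
            nlinarith [pow_nonneg (by norm_num : (0:ℝ) ≤ 2) (2 * n)]
    refine ((integrable_one_add_norm hd).const_mul ((2:ℝ) ^ (2 * n))).mono'
      hGc.aestronglyMeasurable ?_
    filter_upwards with ω
    rw [Real.norm_eq_abs, abs_of_nonneg (by positivity)]
    have hA : (0:ℝ) < 1 + ‖ω‖ ^ (2 * n) := by positivity
    have hB : (0:ℝ) < (1 + ‖ω‖) ^ (2 * n) := by positivity
    have h2 : (1 + ‖ω‖) ^ (-((2 * n : ℕ) : ℝ)) = ((1 + ‖ω‖) ^ (2 * n) : ℝ)⁻¹ := by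
      rw [Real.rpow_neg (by positivity), Real.rpow_natCast]
    rw [h2]
    have : (1:ℝ) / (1 + ‖ω‖ ^ (2 * n)) ≤ 2 ^ (2 * n) / (1 + ‖ω‖) ^ (2 * n) := by
      rw [div_le_div_iff₀ hA hB]
      nlinarith [key ‖ω‖ (norm_nonneg ω)]
    calc (1 + ‖ω‖ ^ (2 * n))⁻¹ = 1 / (1 + ‖ω‖ ^ (2 * n)) := (one_div _).symm
      _ ≤ 2 ^ (2 * n) / (1 + ‖ω‖) ^ (2 * n) := this
      _ = 2 ^ (2 * n) * ((1 + ‖ω‖) ^ (2 * n))⁻¹ := div_eq_mul_inv _ _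
  -- Plancherel consequences
  have hprod : ∀ (k : ℕ) (ω : EuclideanSpace ℝ (Fin d)) (i : Fin d),
      (∏ j, (ω j) ^ (2 * Pi.single i k j)) = (ω i) ^ (2 * k) := by
    intro k ω i
    rw [Finset.prod_eq_single i]
    · rw [Pi.single_eq_same]
    · intro j _ hj; rw [Pi.single_eq_of_ne hj]; simp
    · simp
  have hP1 : ∀ i : Fin d,
      ∫⁻ ω : EuclideanSpace ℝ (Fin d), ENNReal.ofReal ((ω i) ^ 2 * ‖F ω‖ ^ 2) ≤ ENNReal.ofReal (b ^ 2) := by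
    intro i
    have h := hPlancherel (Pi.single i 1) (Or.inl (by simp [Finset.sum_pi_single']))
    simpa [hprod 1] using h
  have hPs : ∀ i : Fin d,
      ∫⁻ ω : EuclideanSpace ℝ (Fin d), ENNReal.ofReal ((ω i) ^ (2 * (n + 1)) * ‖F ω‖ ^ 2) ≤
        ENNReal.ofReal (b ^ 2) := by
    intro i
    have h := hPlancherel (Pi.single i (n + 1)) (Or.inr (by simp [Finset.sum_pi_single', hn]))
    simpa [hprod (n + 1)] using h
  -- measurability helpers
  have hmeas1 : ∀ i : Fin d,
      Measurable fun ω : EuclideanSpace ℝ (Fin d) => ENNReal.ofReal ((ω i) ^ 2 * ‖F ω‖ ^ 2) := fun i =>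
    (ENNReal.continuous_ofReal.comp
      (((hcoord i).pow 2).mul ((hFc.norm).pow 2))).measurable
  have hmeas2 : ∀ i : Fin d,
      Measurable fun ω : EuclideanSpace ℝ (Fin d) => ENNReal.ofReal ((ω i) ^ (2 * (n + 1)) * ‖F ω‖ ^ 2) := fun i =>
    (ENNReal.continuous_ofReal.comp
      (((hcoord i).pow _).mul ((hFc.norm).pow 2))).measurable
  have hev : ∀ x : ℝ, 0 ≤ x ^ (2 * (n + 1)) := fun x => by
    rw [pow_mul]; positivity
  -- the key second-moment bound
  have hK : ∫⁻ ω : EuclideanSpace ℝ (Fin d), ENNReal.ofReal ((‖ω‖ ^ 2 + ‖ω‖ ^ (2 * (n + 1))) * ‖F ω‖ ^ 2) ≤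
      ENNReal.ofReal (((d : ℝ) + (d : ℝ) ^ (n + 1)) * b ^ 2) := by
    have hpt : ∀ ω : EuclideanSpace ℝ (Fin d), (‖ω‖ ^ 2 + ‖ω‖ ^ (2 * (n + 1))) * ‖F ω‖ ^ 2 ≤
        (∑ i, (ω i) ^ 2 * ‖F ω‖ ^ 2) +
          (d : ℝ) ^ n * ∑ i, (ω i) ^ (2 * (n + 1)) * ‖F ω‖ ^ 2 := by
      intro ω
      have e1 : ‖ω‖ ^ (2 * (n + 1)) = (∑ i, (ω i) ^ 2) ^ (n + 1) := by
        rw [pow_mul, hns]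
      have e2 : (∑ i, (ω i) ^ 2) ^ (n + 1) ≤ (d : ℝ) ^ n * ∑ i, ((ω i) ^ 2) ^ (n + 1) := by
        simpa [Finset.card_univ] using
          pow_sum_le_card_mul_sum_pow (s := (Finset.univ : Finset (Fin d)))
            (f := fun i => (ω i) ^ 2) (fun i _ => sq_nonneg _) n
      have e3 : ‖ω‖ ^ (2 * (n + 1)) ≤ (d : ℝ) ^ n * ∑ i, (ω i) ^ (2 * (n + 1)) := by
        rw [e1]
        calc (∑ i, (ω i) ^ 2) ^ (n + 1) ≤ (d : ℝ) ^ n * ∑ i, ((ω i) ^ 2) ^ (n + 1) := e2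
          _ = (d : ℝ) ^ n * ∑ i, (ω i) ^ (2 * (n + 1)) := by
              congr 1; refine Finset.sum_congr rfl fun i _ => ?_
              rw [← pow_mul]
      have hF2 : (0:ℝ) ≤ ‖F ω‖ ^ 2 := sq_nonneg _
      calc (‖ω‖ ^ 2 + ‖ω‖ ^ (2 * (n + 1))) * ‖F ω‖ ^ 2
          = ‖ω‖ ^ 2 * ‖F ω‖ ^ 2 + ‖ω‖ ^ (2 * (n + 1)) * ‖F ω‖ ^ 2 := by ring
        _ ≤ (∑ i, (ω i) ^ 2) * ‖F ω‖ ^ 2 +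
              ((d : ℝ) ^ n * ∑ i, (ω i) ^ (2 * (n + 1))) * ‖F ω‖ ^ 2 := by
            rw [hns]
            exact add_le_add le_rfl (mul_le_mul_of_nonneg_right e3 hF2)
        _ = (∑ i, (ω i) ^ 2 * ‖F ω‖ ^ 2) +
              (d : ℝ) ^ n * ∑ i, (ω i) ^ (2 * (n + 1)) * ‖F ω‖ ^ 2 := by
            rw [mul_assoc, Finset.sum_mul, Finset.sum_mul]
    have hsum1 : ∫⁻ ω : EuclideanSpace ℝ (Fin d), ENNReal.ofReal (∑ i, (ω i) ^ 2 * ‖F ω‖ ^ 2) ≤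
        (d : ℝ≥0∞) * ENNReal.ofReal (b ^ 2) := by
      calc ∫⁻ ω : EuclideanSpace ℝ (Fin d), ENNReal.ofReal (∑ i, (ω i) ^ 2 * ‖F ω‖ ^ 2)
          = ∫⁻ ω : EuclideanSpace ℝ (Fin d), ∑ i, ENNReal.ofReal ((ω i) ^ 2 * ‖F ω‖ ^ 2) :=
            lintegral_congr fun ω =>
              ENNReal.ofReal_sum_of_nonneg fun i _ => by positivity
        _ = ∑ i, ∫⁻ ω : EuclideanSpace ℝ (Fin d), ENNReal.ofReal ((ω i) ^ 2 * ‖F ω‖ ^ 2) :=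
            lintegral_finset_sum _ fun i _ => hmeas1 i
        _ ≤ ∑ _i : Fin d, ENNReal.ofReal (b ^ 2) := Finset.sum_le_sum fun i _ => hP1 i
        _ = (d : ℝ≥0∞) * ENNReal.ofReal (b ^ 2) := by
            simp [Finset.sum_const, Finset.card_univ, nsmul_eq_mul]
    have hsum2 : ∫⁻ ω : EuclideanSpace ℝ (Fin d), ENNReal.ofReal (∑ i, (ω i) ^ (2 * (n + 1)) * ‖F ω‖ ^ 2) ≤
        (d : ℝ≥0∞) * ENNReal.ofReal (b ^ 2) := by
      calc ∫⁻ ω : EuclideanSpace ℝ (Fin d), ENNReal.ofReal (∑ i, (ω i) ^ (2 * (n + 1)) * ‖F ω‖ ^ 2)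
          = ∫⁻ ω : EuclideanSpace ℝ (Fin d), ∑ i, ENNReal.ofReal ((ω i) ^ (2 * (n + 1)) * ‖F ω‖ ^ 2) :=
            lintegral_congr fun ω =>
              ENNReal.ofReal_sum_of_nonneg fun i _ =>
                mul_nonneg (hev _) (sq_nonneg _)
        _ = ∑ i, ∫⁻ ω : EuclideanSpace ℝ (Fin d), ENNReal.ofReal ((ω i) ^ (2 * (n + 1)) * ‖F ω‖ ^ 2) :=
            lintegral_finset_sum _ fun i _ => hmeas2 i
        _ ≤ ∑ _i : Fin d, ENNReal.ofReal (b ^ 2) := Finset.sum_le_sum fun i _ => hPs i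
        _ = (d : ℝ≥0∞) * ENNReal.ofReal (b ^ 2) := by
            simp [Finset.sum_const, Finset.card_univ, nsmul_eq_mul]
    have hmA : Measurable fun ω : EuclideanSpace ℝ (Fin d) => ENNReal.ofReal (∑ i, (ω i) ^ 2 * ‖F ω‖ ^ 2) := by
      refine (ENNReal.continuous_ofReal.comp ?_).measurable
      exact continuous_finset_sum _ fun i _ => ((hcoord i).pow 2).mul ((hFc.norm).pow 2)
    have hmB : Measurable fun ω : EuclideanSpace ℝ (Fin d) =>
        ENNReal.ofReal (∑ i, (ω i) ^ (2 * (n + 1)) * ‖F ω‖ ^ 2) := by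
      refine (ENNReal.continuous_ofReal.comp ?_).measurable
      exact continuous_finset_sum _ fun i _ => ((hcoord i).pow _).mul ((hFc.norm).pow 2)
    calc ∫⁻ ω : EuclideanSpace ℝ (Fin d), ENNReal.ofReal ((‖ω‖ ^ 2 + ‖ω‖ ^ (2 * (n + 1))) * ‖F ω‖ ^ 2)
        ≤ ∫⁻ ω : EuclideanSpace ℝ (Fin d), ENNReal.ofReal ((∑ i, (ω i) ^ 2 * ‖F ω‖ ^ 2) +
            (d : ℝ) ^ n * ∑ i, (ω i) ^ (2 * (n + 1)) * ‖F ω‖ ^ 2) :=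
          lintegral_mono fun ω => ENNReal.ofReal_le_ofReal (hpt ω)
      _ = ∫⁻ ω : EuclideanSpace ℝ (Fin d), (ENNReal.ofReal (∑ i, (ω i) ^ 2 * ‖F ω‖ ^ 2) +
            ENNReal.ofReal ((d : ℝ) ^ n) *
              ENNReal.ofReal (∑ i, (ω i) ^ (2 * (n + 1)) * ‖F ω‖ ^ 2)) := by
          refine lintegral_congr fun ω => ?_
          rw [ENNReal.ofReal_add (by positivity)
              (mul_nonneg (by positivity)
                (Finset.sum_nonneg fun i _ => mul_nonneg (hev _) (sq_nonneg _))),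
            ENNReal.ofReal_mul (by positivity)]
      _ = (∫⁻ ω : EuclideanSpace ℝ (Fin d), ENNReal.ofReal (∑ i, (ω i) ^ 2 * ‖F ω‖ ^ 2)) +
            ENNReal.ofReal ((d : ℝ) ^ n) *
              ∫⁻ ω : EuclideanSpace ℝ (Fin d), ENNReal.ofReal (∑ i, (ω i) ^ (2 * (n + 1)) * ‖F ω‖ ^ 2) := by
          rw [lintegral_add_left hmA, lintegral_const_mul _ hmB]
      _ ≤ (d : ℝ≥0∞) * ENNReal.ofReal (b ^ 2) +
            ENNReal.ofReal ((d : ℝ) ^ n) * ((d : ℝ≥0∞) * ENNReal.ofReal (b ^ 2)) :=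
          add_le_add hsum1 (mul_le_mul_right hsum2 _)
      _ = ENNReal.ofReal (((d : ℝ) + (d : ℝ) ^ (n + 1)) * b ^ 2) := by
          have e1 : ENNReal.ofReal ((d : ℝ) * b ^ 2) =
              (d : ℝ≥0∞) * ENNReal.ofReal (b ^ 2) := by
            rw [ENNReal.ofReal_mul (by positivity), ENNReal.ofReal_natCast]
          have e2 : ENNReal.ofReal ((d : ℝ) ^ n * ((d : ℝ) * b ^ 2)) =
              ENNReal.ofReal ((d : ℝ) ^ n) * ((d : ℝ≥0∞) * ENNReal.ofReal (b ^ 2)) := by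
            rw [ENNReal.ofReal_mul (by positivity), e1]
          rw [← e2, ← e1, ← ENNReal.ofReal_add (by positivity) (by positivity)]
          congr 1
          ring
  -- Cauchy–Schwarz (Hölder with p = q = 2)
  have hmh : Measurable fun ω : EuclideanSpace ℝ (Fin d) => ENNReal.ofReal (‖ω‖ * ‖F ω‖) :=
    (ENNReal.continuous_ofReal.comp (continuous_norm.mul hFc.norm)).measurable
  have hHolder : ∫⁻ ω : EuclideanSpace ℝ (Fin d), ENNReal.ofReal (‖ω‖ * ‖F ω‖) ≤
      (∫⁻ ω : EuclideanSpace ℝ (Fin d), ENNReal.ofReal ((1 + ‖ω‖ ^ (2 * n))⁻¹)) ^ (1/2 : ℝ) *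
        (∫⁻ ω : EuclideanSpace ℝ (Fin d), ENNReal.ofReal ((‖ω‖ ^ 2 + ‖ω‖ ^ (2 * (n + 1))) * ‖F ω‖ ^ 2)) ^ (1/2 : ℝ) := by
    set A : EuclideanSpace ℝ (Fin d) → ℝ≥0∞ := fun ω => ENNReal.ofReal (Real.sqrt ((1 + ‖ω‖ ^ (2 * n))⁻¹)) with hA
    set B : EuclideanSpace ℝ (Fin d) → ℝ≥0∞ := fun ω =>
      ENNReal.ofReal (Real.sqrt (1 + ‖ω‖ ^ (2 * n)) * (‖ω‖ * ‖F ω‖)) with hB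
    have hAm : AEMeasurable A volume :=
      ((ENNReal.continuous_ofReal.comp (hGc.sqrt)).measurable).aemeasurable
    have hBm : AEMeasurable B volume := by
      refine ((ENNReal.continuous_ofReal.comp ?_).measurable).aemeasurable
      exact ((continuous_const.add ((continuous_norm (E := EuclideanSpace ℝ (Fin d))).pow (2 * n))).sqrt).mul
        (continuous_norm.mul hFc.norm)
    have h := ENNReal.lintegral_mul_le_Lp_mul_Lq volume
      (Real.HolderConjugate.two_two : Real.HolderConjugate 2 2) hAm hBm
    have hABeq : ∀ ω : EuclideanSpace ℝ (Fin d), ENNReal.ofReal (‖ω‖ * ‖F ω‖) = (A * B) ω := by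
      intro ω
      have hpos : (0:ℝ) < 1 + ‖ω‖ ^ (2 * n) := by positivity
      have : Real.sqrt ((1 + ‖ω‖ ^ (2 * n))⁻¹) * Real.sqrt (1 + ‖ω‖ ^ (2 * n)) = 1 := by
        rw [← Real.sqrt_mul (by positivity), inv_mul_cancel₀ hpos.ne', Real.sqrt_one]
      simp only [hA, hB, Pi.mul_apply]
      rw [← ENNReal.ofReal_mul (Real.sqrt_nonneg _), ← mul_assoc, this, one_mul]
    have hA2 : ∀ ω : EuclideanSpace ℝ (Fin d), A ω ^ (2:ℝ) = ENNReal.ofReal ((1 + ‖ω‖ ^ (2 * n))⁻¹) := by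
      intro ω
      rw [hA, ENNReal.ofReal_rpow_of_nonneg (Real.sqrt_nonneg _) (by norm_num)]
      congr 1
      rw [show (2:ℝ) = ((2:ℕ):ℝ) by norm_num, Real.rpow_natCast,
        Real.sq_sqrt (by positivity)]
    have hB2 : ∀ ω : EuclideanSpace ℝ (Fin d), B ω ^ (2:ℝ) =
        ENNReal.ofReal ((‖ω‖ ^ 2 + ‖ω‖ ^ (2 * (n + 1))) * ‖F ω‖ ^ 2) := by
      intro ω
      rw [hB, ENNReal.ofReal_rpow_of_nonneg (by positivity) (by norm_num)]
      congr 1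
      rw [show (2:ℝ) = ((2:ℕ):ℝ) by norm_num, Real.rpow_natCast, mul_pow, mul_pow,
        Real.sq_sqrt (by positivity)]
      ring
    calc ∫⁻ ω : EuclideanSpace ℝ (Fin d), ENNReal.ofReal (‖ω‖ * ‖F ω‖) = ∫⁻ ω : EuclideanSpace ℝ (Fin d), (A * B) ω :=
          lintegral_congr hABeq
      _ ≤ (∫⁻ ω : EuclideanSpace ℝ (Fin d), A ω ^ (2:ℝ)) ^ (1/2 : ℝ) * (∫⁻ ω : EuclideanSpace ℝ (Fin d), B ω ^ (2:ℝ)) ^ (1/2 : ℝ) := h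
      _ = _ := by
          rw [lintegral_congr hA2, lintegral_congr hB2]
  -- assemble
  have hJG : ∫⁻ ω : EuclideanSpace ℝ (Fin d), ENNReal.ofReal ((1 + ‖ω‖ ^ (2 * n))⁻¹) =
      ENNReal.ofReal (∫ ω : EuclideanSpace ℝ (Fin d), (1 + ‖ω‖ ^ (2 * n))⁻¹) :=
    (MeasureTheory.ofReal_integral_eq_lintegral_ofReal hGint
      (Filter.Eventually.of_forall fun ω => by positivity)).symm
  have hIG : 0 ≤ ∫ ω : EuclideanSpace ℝ (Fin d), (1 + ‖ω‖ ^ (2 * n))⁻¹ :=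
    integral_nonneg fun ω => by positivity
  set IG : ℝ := ∫ ω : EuclideanSpace ℝ (Fin d), (1 + ‖ω‖ ^ (2 * n))⁻¹ with hIGdef
  set R : ℝ := b * Real.sqrt d * Real.sqrt (((d : ℝ) + (d : ℝ) ^ (n + 1)) * IG) with hR
  have hRnn : 0 ≤ R := by
    rw [hR]; positivity
  have hmain : ∫⁻ ω : EuclideanSpace ℝ (Fin d), ENNReal.ofReal ((∑ i, |ω i|) * ‖F ω‖) ≤ ENNReal.ofReal R := by
    calc ∫⁻ ω : EuclideanSpace ℝ (Fin d), ENNReal.ofReal ((∑ i, |ω i|) * ‖F ω‖)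
        ≤ ∫⁻ ω : EuclideanSpace ℝ (Fin d), ENNReal.ofReal (Real.sqrt d) * ENNReal.ofReal (‖ω‖ * ‖F ω‖) := by
          refine lintegral_mono fun ω => ?_
          rw [← ENNReal.ofReal_mul (Real.sqrt_nonneg _), ← mul_assoc]
          exact ENNReal.ofReal_le_ofReal
            (mul_le_mul_of_nonneg_right (hsum_abs ω) (norm_nonneg _))
      _ = ENNReal.ofReal (Real.sqrt d) * ∫⁻ ω : EuclideanSpace ℝ (Fin d), ENNReal.ofReal (‖ω‖ * ‖F ω‖) :=
          lintegral_const_mul _ hmh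
      _ ≤ ENNReal.ofReal (Real.sqrt d) *
            ((ENNReal.ofReal IG) ^ (1/2 : ℝ) *
              (ENNReal.ofReal (((d : ℝ) + (d : ℝ) ^ (n + 1)) * b ^ 2)) ^ (1/2 : ℝ)) := by
          refine mul_le_mul_right ?_ _
          refine le_trans hHolder ?_
          rw [hJG]
          exact mul_le_mul' le_rfl (ENNReal.rpow_le_rpow hK (by norm_num))
      _ = ENNReal.ofReal R := by
          rw [ENNReal.ofReal_rpow_of_nonneg hIG (by norm_num),
            ENNReal.ofReal_rpow_of_nonneg (by positivity) (by norm_num),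
            ← ENNReal.ofReal_mul (by positivity), ← ENNReal.ofReal_mul (Real.sqrt_nonneg _)]
          congr 1
          rw [← Real.sqrt_eq_rpow, ← Real.sqrt_eq_rpow, hR]
          rw [Real.sqrt_mul (by positivity : (0:ℝ) ≤ (d : ℝ) + (d : ℝ) ^ (n + 1)) IG]
          rw [show ((d : ℝ) + (d : ℝ) ^ (n + 1)) * b ^ 2
              = b ^ 2 * ((d : ℝ) + (d : ℝ) ^ (n + 1)) by ring,
            Real.sqrt_mul (sq_nonneg b), Real.sqrt_sq hb]
          ring
  have hgc : Continuous fun ω : EuclideanSpace ℝ (Fin d) => (∑ i, |ω i|) * ‖F ω‖ := by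
    exact (continuous_finset_sum _ fun i _ => (hcoord i).abs).mul hFc.norm
  have hgnn : ∀ ω : EuclideanSpace ℝ (Fin d), 0 ≤ (∑ i, |ω i|) * ‖F ω‖ := fun ω => by positivity
  have hgint : Integrable (fun ω : EuclideanSpace ℝ (Fin d) => (∑ i, |ω i|) * ‖F ω‖) := by
    refine ⟨hgc.aestronglyMeasurable, ?_⟩
    rw [HasFiniteIntegral]
    have : ∀ ω : EuclideanSpace ℝ (Fin d), ‖(∑ i, |ω i|) * ‖F ω‖‖ₑ =
        ENNReal.ofReal ((∑ i, |ω i|) * ‖F ω‖) := fun ω =>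
      Real.enorm_eq_ofReal (hgnn ω)
    rw [lintegral_congr this]
    exact lt_of_le_of_lt hmain ENNReal.ofReal_lt_top
  refine ⟨hgint, hGint, ?_⟩
  rw [MeasureTheory.integral_eq_lintegral_of_nonneg_ae
    (Filter.Eventually.of_forall hgnn) hgc.aestronglyMeasurable]
  exact ENNReal.toReal_le_of_le_ofReal hRnn hmain
end

section
/- Let X ⊂ ℝ be an interval, and let f : ℝ → ℝ be given by f = 1_{C} − 1_{ℝ∖C} where C = {x : g(x) ≥ 0} for a function g having at most N zeros, each pair of zeros at distance at least b > 0 apart. Then the first-order L¹ modulus of smoothness satisfies ξ(f, t) := sup_{|u| ≤ t} ∫_ℝ |f(x + u) − f(x)|·1_X(x) dx ≤ 4Nt for t ≤ b, whence sup_{t>0} t^{−s} ξ(f,t) ≤ 4N b^{1−s} ∨ 2 b^{−s} λ(X) for any 0 < s ≤ 1. -/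
open MeasureTheory
open scoped ENNReal

theorem tv_potential_lipschitz (a c b : ℝ) (hb : 0 < b) (N : ℕ)
    (g : ℝ → ℝ) (hg : Continuous g)
    (hZfin : {x : ℝ | g x = 0}.Finite)
    (hZcard : {x : ℝ | g x = 0}.ncard ≤ N)
    (hsep : ∀ x ∈ {x : ℝ | g x = 0}, ∀ y ∈ {x : ℝ | g x = 0},
      x ≠ y → b ≤ |x - y|) :
    (∀ t : ℝ, 0 < t → t ≤ b → ∀ u : ℝ, |u| ≤ t →
      ∫ x in Set.Icc a c,
        |(if 0 ≤ g (x + u) then (1 : ℝ) else -1) -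
          (if 0 ≤ g x then (1 : ℝ) else -1)| ≤ 4 * N * t) ∧
    (∀ s : ℝ, 0 < s → s ≤ 1 → ∀ t : ℝ, 0 < t → ∀ u : ℝ, |u| ≤ t →
      t ^ (-s) * ∫ x in Set.Icc a c,
          |(if 0 ≤ g (x + u) then (1 : ℝ) else -1) -
            (if 0 ≤ g x then (1 : ℝ) else -1)| ≤
        max (4 * N * b ^ (1 - s))
          (2 * b ^ (-s) * (volume (Set.Icc a c)).toReal)) := by
  classical
  set Z : Finset ℝ := hZfin.toFinset with hZdef
  have hZcard' : (Z.card : ℝ) ≤ N := by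
    have : Z.card = {x : ℝ | g x = 0}.ncard := (Set.ncard_eq_toFinset_card _ hZfin).symm
    rw [this]
    exact_mod_cast hZcard
  have hmeasF : ∀ u : ℝ, Measurable fun x : ℝ => (if 0 ≤ g (x + u) then (1 : ℝ) else -1) := by
    intro u
    exact Measurable.ite
      (measurableSet_le measurable_const (hg.measurable.comp (measurable_add_const u)))
      measurable_const measurable_const
  have hmeasF0 : Measurable fun x : ℝ => (if 0 ≤ g x then (1 : ℝ) else -1) :=
    Measurable.ite (measurableSet_le measurable_const hg.measurable)
      measurable_const measurable_const
  have hmeasH : ∀ u : ℝ, Measurable fun x : ℝ =>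
      |(if 0 ≤ g (x + u) then (1 : ℝ) else -1) - (if 0 ≤ g x then (1 : ℝ) else -1)| := by
    intro u
    exact ((hmeasF u).sub hmeasF0).abs
  have hbound2 : ∀ u x : ℝ,
      |(if 0 ≤ g (x + u) then (1 : ℝ) else -1) - (if 0 ≤ g x then (1 : ℝ) else -1)| ≤ 2 := by
    intro u x
    split_ifs <;> norm_num
  have hInt : ∀ u : ℝ, IntegrableOn (fun x : ℝ =>
      |(if 0 ≤ g (x + u) then (1 : ℝ) else -1) - (if 0 ≤ g x then (1 : ℝ) else -1)|)
      (Set.Icc a c) volume := by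
    intro u
    refine Measure.integrableOn_of_bounded (M := 2) measure_Icc_lt_top.ne
      ((hmeasH u).aestronglyMeasurable) (ae_of_all _ fun x => ?_)
    simpa [Real.norm_eq_abs, abs_abs] using hbound2 u x
  have hnonnegInt : ∀ u : ℝ, 0 ≤ ∫ x in Set.Icc a c,
      |(if 0 ≤ g (x + u) then (1 : ℝ) else -1) - (if 0 ≤ g x then (1 : ℝ) else -1)| := by
    intro u
    exact setIntegral_nonneg measurableSet_Icc fun x _ => abs_nonneg _
  -- key estimate, valid for all 0 < t (no need for t ≤ b)
  have key : ∀ t : ℝ, 0 < t → ∀ u : ℝ, |u| ≤ t →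
      ∫ x in Set.Icc a c,
        |(if 0 ≤ g (x + u) then (1 : ℝ) else -1) -
          (if 0 ≤ g x then (1 : ℝ) else -1)| ≤ 4 * N * t := by
    intro t ht u hu
    set B : Set ℝ := ⋃ z ∈ Z, Set.Icc (z - t) (z + t) with hBdef
    have hBmeas : MeasurableSet B :=
      Z.measurableSet_biUnion fun _ _ => measurableSet_Icc
    have hBvol : volume B ≤ (N : ℝ≥0∞) * ENNReal.ofReal (2 * t) := by
      calc volume B ≤ ∑ z ∈ Z, volume (Set.Icc (z - t) (z + t)) :=
            measure_biUnion_finset_le _ _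
        _ = ∑ z ∈ Z, ENNReal.ofReal (2 * t) := by
            refine Finset.sum_congr rfl fun z _ => ?_
            rw [Real.volume_Icc]
            ring_nf
        _ = (Z.card : ℝ≥0∞) * ENNReal.ofReal (2 * t) := by
            rw [Finset.sum_const, nsmul_eq_mul]
        _ ≤ (N : ℝ≥0∞) * ENNReal.ofReal (2 * t) := by
            gcongr
            exact_mod_cast Set.ncard_eq_toFinset_card _ hZfin ▸ hZcard
    have hBvol_ne_top : volume B ≠ ⊤ :=
      ne_top_of_le_ne_top (by finiteness) hBvol
    -- outside B the integrand vanishes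
    have hzero : ∀ x : ℝ, x ∉ B →
        |(if 0 ≤ g (x + u) then (1 : ℝ) else -1) - (if 0 ≤ g x then (1 : ℝ) else -1)| = 0 := by
      intro x hx
      have hiff : (0 ≤ g (x + u)) ↔ (0 ≤ g x) := by
        by_contra hne
        apply hx
        have h0 : (0 : ℝ) ∈ Set.uIcc (g x) (g (x + u)) := by
          rw [Set.mem_uIcc]
          by_cases h1 : 0 ≤ g (x + u)
          · have h2 : ¬ 0 ≤ g x := fun h2 => hne (iff_of_true h1 h2)
            exact Or.inl ⟨(lt_of_not_ge h2).le, h1⟩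
          · have h2 : 0 ≤ g x := by
              by_contra h2; exact hne (iff_of_false h1 h2)
            exact Or.inr ⟨(lt_of_not_ge h1).le, h2⟩
        obtain ⟨z, hz1, hz2⟩ := intermediate_value_uIcc hg.continuousOn h0
        have hzZ : z ∈ Z := hZfin.mem_toFinset.mpr hz2
        have huu := abs_le.mp hu
        refine Set.mem_biUnion hzZ ?_
        rcases Set.mem_uIcc.mp hz1 with ⟨h1, h2⟩ | ⟨h1, h2⟩ <;>
          exact ⟨by linarith [huu.1, huu.2], by linarith [huu.1, huu.2]⟩
      simp only [hiff, sub_self, abs_zero]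
    -- pointwise domination by the indicator of B
    have hpt : ∀ x : ℝ,
        |(if 0 ≤ g (x + u) then (1 : ℝ) else -1) - (if 0 ≤ g x then (1 : ℝ) else -1)| ≤
          Set.indicator B (fun _ => (2 : ℝ)) x := by
      intro x
      by_cases hx : x ∈ B
      · rw [Set.indicator_of_mem hx]; exact hbound2 u x
      · rw [Set.indicator_of_notMem hx, hzero x hx]
    have hIntInd : Integrable (Set.indicator B (fun _ => (2 : ℝ))) volume := by
      rw [integrable_indicator_iff hBmeas]
      exact integrableOn_const hBvol_ne_top
    calc ∫ x in Set.Icc a c,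
          |(if 0 ≤ g (x + u) then (1 : ℝ) else -1) - (if 0 ≤ g x then (1 : ℝ) else -1)|
        ≤ ∫ x in Set.Icc a c, Set.indicator B (fun _ => (2 : ℝ)) x :=
          setIntegral_mono (hInt u) hIntInd.integrableOn fun x => hpt x
      _ ≤ ∫ x, Set.indicator B (fun _ => (2 : ℝ)) x :=
          setIntegral_le_integral hIntInd
            (ae_of_all _ fun x => Set.indicator_nonneg (fun _ _ => by norm_num) x)
      _ = 2 * (volume B).toReal := by
          rw [integral_indicator hBmeas, setIntegral_const, smul_eq_mul, mul_comm]; rfl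
      _ ≤ 2 * ((N : ℝ) * (2 * t)) := by
          gcongr
          have := ENNReal.toReal_mono (by finiteness) hBvol
          rwa [ENNReal.toReal_mul, ENNReal.toReal_ofReal (by positivity), ENNReal.toReal_natCast] at this
      _ = 4 * N * t := by ring
  refine ⟨fun t ht _ u hu => key t ht u hu, ?_⟩
  intro s hs hs1 t ht u hu
  rcases le_or_gt t b with htb | hbt
  · -- use key, bound by first term of the max
    refine le_trans ?_ (le_max_left _ _)
    have h1 : t ^ (-s) * ∫ x in Set.Icc a c,
        |(if 0 ≤ g (x + u) then (1 : ℝ) else -1) - (if 0 ≤ g x then (1 : ℝ) else -1)| ≤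
        t ^ (-s) * (4 * N * t) :=
      mul_le_mul_of_nonneg_left (key t ht u hu) (by positivity)
    refine h1.trans ?_
    have ht' : t ^ (-s) * (4 * N * t) = 4 * N * t ^ (1 - s) := by
      rw [show (1 : ℝ) - s = (-s) + 1 by ring, Real.rpow_add ht, Real.rpow_one]
      ring
    rw [ht']
    exact mul_le_mul_of_nonneg_left (Real.rpow_le_rpow ht.le htb (by linarith)) (by positivity)
  · -- t > b : bound integral by 2 * volume and t^{-s} ≤ b^{-s}
    refine le_trans ?_ (le_max_right _ _)
    have hIb : ∫ x in Set.Icc a c,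
        |(if 0 ≤ g (x + u) then (1 : ℝ) else -1) - (if 0 ≤ g x then (1 : ℝ) else -1)| ≤
        2 * (volume (Set.Icc a c)).toReal := by
      calc ∫ x in Set.Icc a c,
            |(if 0 ≤ g (x + u) then (1 : ℝ) else -1) - (if 0 ≤ g x then (1 : ℝ) else -1)|
          ≤ ∫ _x in Set.Icc a c, (2 : ℝ) :=
            setIntegral_mono (hInt u) (integrableOn_const measure_Icc_lt_top.ne)
              fun x => hbound2 u x
        _ = 2 * (volume (Set.Icc a c)).toReal := by
            rw [setIntegral_const, smul_eq_mul, mul_comm]; rfl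
    have hts : t ^ (-s) ≤ b ^ (-s) := by
      rw [Real.rpow_neg ht.le, Real.rpow_neg hb.le]
      exact inv_anti₀ (Real.rpow_pos_of_pos hb s) (Real.rpow_le_rpow hb.le hbt.le hs.le)
    calc t ^ (-s) * ∫ x in Set.Icc a c,
          |(if 0 ≤ g (x + u) then (1 : ℝ) else -1) - (if 0 ≤ g x then (1 : ℝ) else -1)|
        ≤ b ^ (-s) * (2 * (volume (Set.Icc a c)).toReal) := by
          have h0 := hnonnegInt u
          exact mul_le_mul hts hIb h0 (by positivity)
      _ = 2 * b ^ (-s) * (volume (Set.Icc a c)).toReal := by ring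
end
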